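/- Under the Lipschitz condition Σ_{i<j}|p_{i,j}(x) - p_{i,j}(x')| ≤ M‖x-x'‖ and the noise condition H = inf_x min_{i<j} |p_{i,j}(x) - 1/2| > 0 with all P_x and all P_C (C in the partition P) strictly stochastically transitive, the piecewise-constant rule s*_P given by local Kemeny medians satisfies sup_x d_τ(σ*_{P_x}, s*_P(x)) ≤ (M/H) δ_P, where δ_P is the maximal cell diameter. -/

import Mathlib

open Finset

/-- The set of ordered pairs (i,j) with i < j. -/
def pairs (n : ℕ) : Finset (Fin n × Fin n) :=
  Finset.univ.filter fun p => p.1 < p.2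

/-- Kendall tau distance between two permutations. -/
noncomputable def dtau {n : ℕ} (σ σ' : Equiv.Perm (Fin n)) : ℝ :=
  ∑ p ∈ pairs n,
    if (((σ p.1 : ℕ) : ℤ) - ((σ p.2 : ℕ) : ℤ)) * (((σ' p.1 : ℕ) : ℤ) - ((σ' p.2 : ℕ) : ℤ)) < 0
    then 1 else 0

/-- Expected Kendall tau distance L_P(σ) = E_{Σ∼P}[d_τ(Σ,σ)]. -/
noncomputable def L {n : ℕ} (P : Equiv.Perm (Fin n) → ℝ) (σ : Equiv.Perm (Fin n)) : ℝ :=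
  ∑ τ : Equiv.Perm (Fin n), P τ * dtau τ σ

/-- Pairwise probability p_{i,j} = P{Σ(i) < Σ(j)}. -/
noncomputable def pp {n : ℕ} (P : Equiv.Perm (Fin n) → ℝ) (i j : Fin n) : ℝ :=
  ∑ τ : Equiv.Perm (Fin n), P τ * (if τ i < τ j then 1 else 0)

/-- P is a probability distribution on S_n. -/
def IsProb {n : ℕ} (P : Equiv.Perm (Fin n) → ℝ) : Prop :=
  (∀ τ, 0 ≤ P τ) ∧ ∑ τ : Equiv.Perm (Fin n), P τ = 1

/-- σ is a Kemeny median of P. -/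
def IsMedian {n : ℕ} (P : Equiv.Perm (Fin n) → ℝ) (σ : Equiv.Perm (Fin n)) : Prop :=
  ∀ τ, L P σ ≤ L P τ

/-- L*_P = min_σ L_P(σ). -/
noncomputable def Lstar {n : ℕ} (P : Equiv.Perm (Fin n) → ℝ) : ℝ :=
  ⨅ σ : Equiv.Perm (Fin n), L P σ

/-- Stochastic transitivity. -/
def StochTrans {n : ℕ} (P : Equiv.Perm (Fin n) → ℝ) : Prop :=
  ∀ i j k : Fin n, 1/2 ≤ pp P i j → 1/2 ≤ pp P j k → 1/2 ≤ pp P i k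

/-- Strict stochastic transitivity. -/
def StrictStochTrans {n : ℕ} (P : Equiv.Perm (Fin n) → ℝ) : Prop :=
  StochTrans P ∧ ∀ i j : Fin n, i < j → pp P i j ≠ 1/2

open MeasureTheory

instance {n : ℕ} : MeasurableSpace (Equiv.Perm (Fin n)) := ⊤

/-- Risk of a ranking rule s: R(s) = E_{X∼μ}[L_{P_X}(s(X))]. -/
noncomputable def Risk {n : ℕ} {X : Type*} [MeasurableSpace X] (μ : Measure X)
    (P : X → Equiv.Perm (Fin n) → ℝ) (s : X → Equiv.Perm (Fin n)) : ℝ :=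
  ∫ x, L (P x) (s x) ∂μ

/-- Minimum risk over all measurable ranking rules. -/
noncomputable def RiskStar {n : ℕ} {X : Type*} [MeasurableSpace X] (μ : Measure X)
    (P : X → Equiv.Perm (Fin n) → ℝ) : ℝ :=
  sInf {r | ∃ s : X → Equiv.Perm (Fin n), Measurable s ∧ r = Risk μ P s}

/-- Conditional law of Σ given X ∈ C. -/
noncomputable def condP {n : ℕ} {X : Type*} [MeasurableSpace X] (μ : Measure X)
    (P : X → Equiv.Perm (Fin n) → ℝ) (C : Set X) (τ : Equiv.Perm (Fin n)) : ℝ :=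
  (∫ x in C, P x τ ∂μ) / (μ C).toReal


-- auxiliary lemmas

lemma prod_neg_iff {a b c d : ℕ} (hab : a ≠ b) (hcd : c ≠ d) :
    ((a:ℤ) - b) * ((c:ℤ) - d) < 0 ↔ (a < b ↔ ¬ (c < d)) := by
  rw [mul_neg_iff]; omega

lemma pp_nonneg {n : ℕ} {P : Equiv.Perm (Fin n) → ℝ} (hP : IsProb P) (i j : Fin n) :
    0 ≤ pp P i j :=
  Finset.sum_nonneg fun τ _ => mul_nonneg (hP.1 τ) (by split <;> norm_num)

lemma pp_add {n : ℕ} {P : Equiv.Perm (Fin n) → ℝ} (hP : IsProb P) {i j : Fin n}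
    (hij : i ≠ j) : pp P i j + pp P j i = 1 := by
  rw [pp, pp, ← Finset.sum_add_distrib]
  have key : ∀ τ : Equiv.Perm (Fin n),
      P τ * (if τ i < τ j then (1:ℝ) else 0) + P τ * (if τ j < τ i then 1 else 0) = P τ := by
    intro τ
    have hτ : τ i ≠ τ j := fun h => hij (τ.injective h)
    rcases lt_or_gt_of_ne hτ with h | h
    · rw [if_pos h, if_neg (asymm h)]; ring
    · rw [if_neg (asymm h), if_pos h]; ring
  rw [Finset.sum_congr rfl fun τ _ => key τ, hP.2]

lemma pp_self {n : ℕ} (P : Equiv.Perm (Fin n) → ℝ) (i : Fin n) : pp P i i = by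
  exact 0 := by
  simp [pp]

lemma L_eq {n : ℕ} {P : Equiv.Perm (Fin n) → ℝ} (hP : IsProb P) (σ : Equiv.Perm (Fin n)) :
    L P σ = ∑ p ∈ pairs n,
      (if σ p.1 < σ p.2 then 1 - pp P p.1 p.2 else pp P p.1 p.2) := by
  rw [L]
  simp only [dtau, Finset.mul_sum]
  rw [Finset.sum_comm]
  refine Finset.sum_congr rfl fun p hp => ?_
  obtain ⟨i, j⟩ := p
  simp only [pairs, Finset.mem_filter] at hp
  have hij : i ≠ j := ne_of_lt hp.2
  have hσ : (σ i : ℕ) ≠ (σ j : ℕ) := fun h => hij (σ.injective (Fin.val_injective h))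
  by_cases hs : σ i < σ j
  · rw [if_pos hs]
    have hs' : (σ i : ℕ) < (σ j : ℕ) := hs
    have : ∀ τ : Equiv.Perm (Fin n),
        P τ * (if (((τ i : ℕ) : ℤ) - ((τ j : ℕ) : ℤ)) * (((σ i : ℕ) : ℤ) - ((σ j : ℕ) : ℤ)) < 0
          then (1:ℝ) else 0) = P τ - P τ * (if τ i < τ j then 1 else 0) := by
      intro τ
      have hτ : (τ i : ℕ) ≠ (τ j : ℕ) := fun h => hij (τ.injective (Fin.val_injective h))
      simp only [prod_neg_iff hτ hσ]
      by_cases ht : τ i < τ j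
      · have ht' : (τ i : ℕ) < (τ j : ℕ) := ht
        rw [if_neg (by simp [ht', hs']), if_pos ht]; ring
      · have ht' : ¬ (τ i : ℕ) < (τ j : ℕ) := ht
        rw [if_pos (by simp [ht', hs']), if_neg ht]; ring
    rw [Finset.sum_congr rfl fun τ _ => this τ, Finset.sum_sub_distrib, hP.2, pp]
  · rw [if_neg hs]
    have hs' : ¬ (σ i : ℕ) < (σ j : ℕ) := hs
    rw [pp]
    refine Finset.sum_congr rfl fun τ _ => ?_
    have hτ : (τ i : ℕ) ≠ (τ j : ℕ) := fun h => hij (τ.injective (Fin.val_injective h))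
    simp only [prod_neg_iff hτ hσ]
    by_cases ht : τ i < τ j
    · have ht' : (τ i : ℕ) < (τ j : ℕ) := ht
      rw [if_pos (by simp [ht', hs']), if_pos ht]
    · have ht' : ¬ (τ i : ℕ) < (τ j : ℕ) := ht
      rw [if_neg (by simp [ht', hs']), if_neg ht]

lemma median_char {n : ℕ} {P : Equiv.Perm (Fin n) → ℝ} (hP : IsProb P)
    (hT : StrictStochTrans P) {σ : Equiv.Perm (Fin n)} (hσ : IsMedian P σ)
    {i j : Fin n} (hij : i < j) : σ i < σ j ↔ 1/2 < pp P i j := by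
  classical
  -- basic facts about r a b := 1/2 < pp P a b
  have hne : ∀ a b : Fin n, a ≠ b → pp P a b ≠ 1/2 := by
    intro a b hab
    rcases lt_or_gt_of_ne hab with h | h
    · exact hT.2 a b h
    · have h2 := hT.2 b a h
      have := pp_add hP hab
      intro hc; rw [hc] at this; apply h2; linarith
  have hirr : ∀ a : Fin n, ¬ (1/2 < pp P a a) := by
    intro a; rw [pp_self]; norm_num
  have htri : ∀ a b : Fin n, a ≠ b → (1/2 < pp P a b ↔ ¬ (1/2 < pp P b a)) := by
    intro a b hab
    have hsum := pp_add hP hab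
    have h1 := hne a b hab
    have h2 := hne b a hab.symm
    constructor
    · intro h hc; linarith
    · intro h
      rcases lt_or_ge (pp P a b) (1/2) with h' | h'
      · exfalso; apply h; linarith
      · exact lt_of_le_of_ne h' (Ne.symm h1)
  have htrans : ∀ a b c : Fin n, 1/2 < pp P a b → 1/2 < pp P b c → 1/2 < pp P a c := by
    intro a b c h1 h2
    have hab : a ≠ b := fun h => hirr a (h ▸ h1)
    have hbc : b ≠ c := fun h => hirr b (h ▸ h2)
    have hac : a ≠ c := by
      rintro rfl
      exact ((htri a b hab).mp h1) h2
    have := hT.1 a b c (le_of_lt h1) (le_of_lt h2)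
    exact lt_of_le_of_ne this (Ne.symm (hne a c hac))
  -- rank function
  set f : Fin n → ℕ := fun a => (Finset.univ.filter fun b => 1/2 < pp P b a).card with hf
  have hmono : ∀ a b : Fin n, 1/2 < pp P a b → f a < f b := by
    intro a b hab
    apply Finset.card_lt_card
    rw [Finset.ssubset_iff_of_subset]
    · refine ⟨a, ?_, ?_⟩
      · simp only [Finset.mem_filter, Finset.mem_univ, true_and]; exact hab
      · simp only [Finset.mem_filter, Finset.mem_univ, true_and]; exact hirr a
    · intro c hc
      simp only [Finset.mem_filter, Finset.mem_univ, true_and] at hc ⊢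
      exact htrans c a b hc hab
  have hflt : ∀ a : Fin n, f a < n := by
    intro a
    have hsub : (Finset.univ.filter fun b => 1/2 < pp P b a) ⊆ Finset.univ.erase a := by
      intro c hc
      simp only [Finset.mem_filter, Finset.mem_univ, true_and] at hc
      exact Finset.mem_erase.mpr ⟨fun h => hirr a (h ▸ hc), Finset.mem_univ c⟩
    have h1 : f a ≤ (Finset.univ.erase a).card := Finset.card_le_card hsub
    rw [Finset.card_erase_of_mem (Finset.mem_univ a), Finset.card_univ,
      Fintype.card_fin] at h1
    have := a.isLt
    omega
  have htot : ∀ a b : Fin n, a ≠ b → ¬ (1/2 < pp P a b) → 1/2 < pp P b a := by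
    intro a b hab h
    by_contra h2
    exact h ((htri a b hab).mpr h2)
  have hinj : Function.Injective f := by
    intro a b hab
    by_contra hne'
    rcases Classical.em (1/2 < pp P a b) with h | h
    · exact absurd hab (Nat.ne_of_lt (hmono a b h))
    · exact absurd hab.symm (Nat.ne_of_lt (hmono b a (htot a b hne' h)))
  have hgbij : Function.Bijective (fun a => (⟨f a, hflt a⟩ : Fin n)) :=
    Finite.injective_iff_bijective.mp
      (fun a b h => hinj (by simpa using congrArg Fin.val h))
  set σ₀ : Equiv.Perm (Fin n) := Equiv.ofBijective _ hgbij with hσ₀def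
  have hval : ∀ c : Fin n, (σ₀ c : ℕ) = f c := fun c => rfl
  have hσ₀ : ∀ a b : Fin n, a ≠ b → (σ₀ a < σ₀ b ↔ 1/2 < pp P a b) := by
    intro a b hab
    constructor
    · intro h
      by_contra hc
      have h2 : (σ₀ b : ℕ) < (σ₀ a : ℕ) := by
        rw [hval, hval]; exact hmono b a (htot a b hab hc)
      have h1 : (σ₀ a : ℕ) < (σ₀ b : ℕ) := h
      omega
    · intro h
      show (σ₀ a : ℕ) < (σ₀ b : ℕ)
      rw [hval, hval]; exact hmono a b h
  -- termwise comparison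
  have hterm : ∀ p ∈ pairs n,
      (if σ₀ p.1 < σ₀ p.2 then 1 - pp P p.1 p.2 else pp P p.1 p.2) ≤
      (if σ p.1 < σ p.2 then 1 - pp P p.1 p.2 else pp P p.1 p.2) := by
    intro p hp
    simp only [pairs, Finset.mem_filter] at hp
    have hpne : p.1 ≠ p.2 := ne_of_lt hp.2
    rcases Classical.em (1/2 < pp P p.1 p.2) with h | h
    · rw [if_pos ((hσ₀ p.1 p.2 hpne).mpr h)]
      split <;> linarith
    · have h' : pp P p.1 p.2 < 1/2 :=
        lt_of_le_of_ne (not_lt.mp h) (hne p.1 p.2 hpne)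
      rw [if_neg (fun hc => h ((hσ₀ p.1 p.2 hpne).mp hc))]
      split <;> linarith
  by_contra hc
  have hijmem : (i, j) ∈ pairs n := by simp [pairs, hij]
  have hijne : i ≠ j := ne_of_lt hij
  have hstrict : (if σ₀ i < σ₀ j then 1 - pp P i j else pp P i j) <
      (if σ i < σ j then 1 - pp P i j else pp P i j) := by
    rcases Classical.em (1/2 < pp P i j) with h | h
    · have hs : ¬ (σ i < σ j) := fun hs => hc (iff_of_true hs h)
      rw [if_pos ((hσ₀ i j hijne).mpr h), if_neg hs]
      linarith
    · have h' : pp P i j < 1/2 := lt_of_le_of_ne (not_lt.mp h) (hne i j hijne)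
      have hs : σ i < σ j := by
        by_contra hs
        exact hc (iff_of_false hs h)
      rw [if_neg (fun hk => h ((hσ₀ i j hijne).mp hk)), if_pos hs]
      linarith
  have hlt := Finset.sum_lt_sum hterm ⟨(i, j), hijmem, hstrict⟩
  rw [← L_eq hP σ₀, ← L_eq hP σ] at hlt
  exact absurd (hσ σ₀) (not_le.mpr hlt)

lemma integrable_P {n : ℕ} {E : Type*} [MeasurableSpace E] (μ : Measure E)
    [IsFiniteMeasure μ] (P : E → Equiv.Perm (Fin n) → ℝ) (hP : ∀ x, IsProb (P x))
    (hmeas : ∀ τ, Measurable fun x => P x τ) (C : Set E) (τ : Equiv.Perm (Fin n)) :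
    Integrable (fun x => P x τ) (μ.restrict C) := by
  refine (integrable_const (1:ℝ)).mono' ((hmeas τ).aestronglyMeasurable) ?_
  filter_upwards with x
  rw [Real.norm_eq_abs, abs_of_nonneg ((hP x).1 τ)]
  calc P x τ ≤ ∑ τ' : Equiv.Perm (Fin n), P x τ' :=
        Finset.single_le_sum (fun τ' _ => (hP x).1 τ') (Finset.mem_univ τ)
    _ = 1 := (hP x).2

lemma measurable_pp {n : ℕ} {E : Type*} [MeasurableSpace E]
    (P : E → Equiv.Perm (Fin n) → ℝ) (hmeas : ∀ τ, Measurable fun x => P x τ)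
    (i j : Fin n) : Measurable fun x => pp (P x) i j := by
  unfold pp
  exact Finset.measurable_sum _ fun τ _ => (hmeas τ).mul_const _

lemma pp_le_one {n : ℕ} {P : Equiv.Perm (Fin n) → ℝ} (hP : IsProb P) (i j : Fin n) :
    pp P i j ≤ 1 := by
  rw [← hP.2]
  refine Finset.sum_le_sum fun τ _ => ?_
  have h0 := hP.1 τ
  split <;> nlinarith

lemma integrable_pp {n : ℕ} {E : Type*} [MeasurableSpace E] (μ : Measure E)
    [IsFiniteMeasure μ] (P : E → Equiv.Perm (Fin n) → ℝ) (hP : ∀ x, IsProb (P x))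
    (hmeas : ∀ τ, Measurable fun x => P x τ) (C : Set E) (i j : Fin n) :
    Integrable (fun x => pp (P x) i j) (μ.restrict C) := by
  refine (integrable_const (1:ℝ)).mono'
    ((measurable_pp P hmeas i j).aestronglyMeasurable) ?_
  filter_upwards with x
  rw [Real.norm_eq_abs, abs_of_nonneg (pp_nonneg (hP x) i j)]
  exact pp_le_one (hP x) i j

lemma condP_isProb {n : ℕ} {E : Type*} [MeasurableSpace E] (μ : Measure E)
    [IsFiniteMeasure μ] (P : E → Equiv.Perm (Fin n) → ℝ) (hP : ∀ x, IsProb (P x))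
    (hmeas : ∀ τ, Measurable fun x => P x τ) (C : Set E) (hC : MeasurableSet C)
    (hm : (μ C).toReal ≠ 0) :
    IsProb (condP μ P C) := by
  constructor
  · intro τ
    exact div_nonneg (setIntegral_nonneg hC fun x _ => (hP x).1 τ) ENNReal.toReal_nonneg
  · unfold condP
    rw [← Finset.sum_div, ← integral_finset_sum _ (fun τ _ => integrable_P μ P hP hmeas C τ)]
    have heq : (fun x => ∑ τ : Equiv.Perm (Fin n), P x τ) = fun _ => (1:ℝ) :=
      funext fun x => (hP x).2
    rw [heq, setIntegral_const, smul_eq_mul, mul_one, measureReal_def, div_self hm]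

lemma pp_condP {n : ℕ} {E : Type*} [MeasurableSpace E] (μ : Measure E)
    [IsFiniteMeasure μ] (P : E → Equiv.Perm (Fin n) → ℝ) (hP : ∀ x, IsProb (P x))
    (hmeas : ∀ τ, Measurable fun x => P x τ) (C : Set E) (i j : Fin n) :
    pp (condP μ P C) i j = (∫ x in C, pp (P x) i j ∂μ) / (μ C).toReal := by
  unfold pp condP
  simp only [div_mul_eq_mul_div]
  rw [← Finset.sum_div]
  congr 1
  calc ∑ τ : Equiv.Perm (Fin n), (∫ x in C, P x τ ∂μ) * (if τ i < τ j then (1:ℝ) else 0)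
      = ∑ τ : Equiv.Perm (Fin n), ∫ x in C, P x τ * (if τ i < τ j then (1:ℝ) else 0) ∂μ :=
        Finset.sum_congr rfl fun τ _ => (integral_mul_const _ _).symm
    _ = ∫ x in C, ∑ τ : Equiv.Perm (Fin n), P x τ * (if τ i < τ j then (1:ℝ) else 0) ∂μ :=
        (integral_finset_sum _ fun τ _ =>
          (integrable_P μ P hP hmeas C τ).mul_const _).symm

theorem stmt_14 {n : ℕ} {E : Type*} [NormedAddCommGroup E] [MeasurableSpace E]
    (μ : Measure E) [IsProbabilityMeasure μ]
    (P : E → Equiv.Perm (Fin n) → ℝ)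
    (hP : ∀ x, IsProb (P x)) (hmeas : ∀ τ, Measurable fun x => P x τ)
    (M : ℝ) (hM : 0 ≤ M)
    (hLip : ∀ x x', ∑ p ∈ pairs n, |pp (P x) p.1 p.2 - pp (P x') p.1 p.2| ≤ M * ‖x - x'‖)
    (H : ℝ) (hHpos : 0 < H)
    (hH : ∀ x, ∀ i j : Fin n, i < j → H ≤ |pp (P x) i j - 1/2|)
    (hTx : ∀ x, StrictStochTrans (P x))
    (K : ℕ) (C : Fin K → Set E)
    (hC : ∀ k, MeasurableSet (C k))
    (hdisj : ∀ k l, k ≠ l → Disjoint (C k) (C l))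
    (hcover : (⋃ k, C k) = Set.univ)
    (hpos : ∀ k, 0 < (μ (C k)).toReal)
    (hTC : ∀ k, StrictStochTrans (condP μ P (C k)))
    (δ : ℝ) (hδ : ∀ k, ∀ x ∈ C k, ∀ x' ∈ C k, ‖x - x'‖ ≤ δ)
    (σstar : E → Equiv.Perm (Fin n)) (hσstar : ∀ x, IsMedian (P x) (σstar x))
    (σC : Fin K → Equiv.Perm (Fin n)) (hσC : ∀ k, IsMedian (condP μ P (C k)) (σC k)) :
    ∀ k, ∀ x ∈ C k, dtau (σstar x) (σC k) ≤ (M / H) * δ := by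
  intro k x hx
  set Q := condP μ P (C k) with hQdef
  have hm : 0 < (μ (C k)).toReal := hpos k
  have hmne : (μ (C k)).toReal ≠ 0 := ne_of_gt hm
  have hQprob : IsProb Q := condP_isProb μ P hP hmeas (C k) (hC k) hmne
  -- key 1: H * dtau ≤ sum of |pp differences|
  have key1 : H * dtau (σstar x) (σC k) ≤
      ∑ p ∈ pairs n, |pp (P x) p.1 p.2 - pp Q p.1 p.2| := by
    rw [dtau, Finset.mul_sum]
    refine Finset.sum_le_sum fun p hp => ?_
    simp only [pairs, Finset.mem_filter] at hp
    have hlt := hp.2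
    split_ifs with hcond
    · rw [mul_one]
      have hpne : p.1 ≠ p.2 := ne_of_lt hlt
      have hσne : (σstar x p.1 : ℕ) ≠ (σstar x p.2 : ℕ) :=
        fun h => hpne ((σstar x).injective (Fin.val_injective h))
      have hσCne : (σC k p.1 : ℕ) ≠ (σC k p.2 : ℕ) :=
        fun h => hpne ((σC k).injective (Fin.val_injective h))
      rw [prod_neg_iff hσne hσCne] at hcond
      have c1 := median_char (hP x) (hTx x) (hσstar x) hlt
      have c2 := median_char hQprob (hTC k) (hσC k) hlt
      have hHx := hH x p.1 p.2 hlt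
      by_cases hs : σstar x p.1 < σstar x p.2
      · have h1 : 1/2 < pp (P x) p.1 p.2 := c1.mp hs
        have hsn : (σstar x p.1 : ℕ) < (σstar x p.2 : ℕ) := hs
        have hcn : ¬ ((σC k p.1 : ℕ) < (σC k p.2 : ℕ)) := hcond.mp hsn
        have h2 : ¬ (1/2 < pp Q p.1 p.2) := fun h => hcn (c2.mpr h)
        have h2' : pp Q p.1 p.2 ≤ 1/2 := not_lt.mp h2
        have habs : |pp (P x) p.1 p.2 - 1/2| = pp (P x) p.1 p.2 - 1/2 :=
          abs_of_nonneg (by linarith)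
        rw [habs] at hHx
        rw [le_abs]; left; linarith
      · have hsn : ¬ ((σstar x p.1 : ℕ) < (σstar x p.2 : ℕ)) := hs
        have hcn : (σC k p.1 : ℕ) < (σC k p.2 : ℕ) := by
          by_contra h
          exact hsn (hcond.mpr h)
        have h2 : 1/2 < pp Q p.1 p.2 := c2.mp hcn
        have h1 : pp (P x) p.1 p.2 ≤ 1/2 := by
          by_contra h
          exact hs (c1.mpr (not_le.mp h))
        have habs : |pp (P x) p.1 p.2 - 1/2| = 1/2 - pp (P x) p.1 p.2 := by
          rw [abs_of_nonpos (by linarith)]; ring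
        rw [habs] at hHx
        rw [le_abs]; right; linarith
    · rw [mul_zero]
      exact abs_nonneg _
  -- key 2 : sum of |pp differences| ≤ M * δ
  have key2 : ∑ p ∈ pairs n, |pp (P x) p.1 p.2 - pp Q p.1 p.2| ≤ M * δ := by
    have hint : ∀ i j : Fin n,
        Integrable (fun x' => pp (P x') i j) (μ.restrict (C k)) :=
      fun i j => integrable_pp μ P hP hmeas (C k) i j
    have hintd : ∀ i j : Fin n,
        Integrable (fun x' => |pp (P x) i j - pp (P x') i j|) (μ.restrict (C k)) :=
      fun i j => ((integrable_const _).sub (hint i j)).abs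
    have step1 : ∀ p ∈ pairs n, |pp (P x) p.1 p.2 - pp Q p.1 p.2| ≤
        (∫ x' in C k, |pp (P x) p.1 p.2 - pp (P x') p.1 p.2| ∂μ) / (μ (C k)).toReal := by
      intro p _
      rw [hQdef, pp_condP μ P hP hmeas (C k) p.1 p.2]
      have hdiff : pp (P x) p.1 p.2 - (∫ x' in C k, pp (P x') p.1 p.2 ∂μ) / (μ (C k)).toReal
          = (∫ x' in C k, (pp (P x) p.1 p.2 - pp (P x') p.1 p.2) ∂μ) / (μ (C k)).toReal := by
        rw [integral_sub (integrable_const _) (hint p.1 p.2), setIntegral_const,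
          smul_eq_mul, measureReal_def]
        field_simp
      rw [hdiff, abs_div, abs_of_pos hm]
      gcongr
      have hni := norm_integral_le_integral_norm
        (μ := μ.restrict (C k)) (fun x' => pp (P x) p.1 p.2 - pp (P x') p.1 p.2)
      simpa [Real.norm_eq_abs] using hni
    have hbig : ∫ x' in C k, ∑ p ∈ pairs n, |pp (P x) p.1 p.2 - pp (P x') p.1 p.2| ∂μ
        ≤ M * δ * (μ (C k)).toReal := by
      have h1 : ∫ x' in C k, ∑ p ∈ pairs n, |pp (P x) p.1 p.2 - pp (P x') p.1 p.2| ∂μ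
          ≤ ∫ _x' in C k, M * δ ∂μ := by
        refine setIntegral_mono_on
          (integrable_finset_sum _ fun p _ => hintd p.1 p.2)
          (integrable_const _) (hC k) (fun x' hx' => ?_)
        calc ∑ p ∈ pairs n, |pp (P x) p.1 p.2 - pp (P x') p.1 p.2|
            ≤ M * ‖x - x'‖ := hLip x x'
          _ ≤ M * δ := mul_le_mul_of_nonneg_left (hδ k x hx x' hx') hM
      have h2 : ∫ _x' in C k, M * δ ∂μ = M * δ * (μ (C k)).toReal := by
        rw [setIntegral_const, smul_eq_mul, mul_comm, measureReal_def]
      linarith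
    calc ∑ p ∈ pairs n, |pp (P x) p.1 p.2 - pp Q p.1 p.2|
        ≤ ∑ p ∈ pairs n,
          (∫ x' in C k, |pp (P x) p.1 p.2 - pp (P x') p.1 p.2| ∂μ) / (μ (C k)).toReal :=
          Finset.sum_le_sum step1
      _ = (∫ x' in C k, ∑ p ∈ pairs n, |pp (P x) p.1 p.2 - pp (P x') p.1 p.2| ∂μ)
            / (μ (C k)).toReal := by
          rw [← Finset.sum_div, ← integral_finset_sum _ (fun p _ => hintd p.1 p.2)]
      _ ≤ (M * δ * (μ (C k)).toReal) / (μ (C k)).toReal := by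
          gcongr
      _ = M * δ := by field_simp
  have hfinal : dtau (σstar x) (σC k) ≤ M * δ / H := by
    rw [le_div_iff₀ hHpos]
    nlinarith [key1.trans key2]
  calc dtau (σstar x) (σC k) ≤ M * δ / H := hfinal
    _ = (M / H) * δ := by ring
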